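/- Let (Ω,F,P) be a complete probability space and let L0+ denote the set of (a.s.-equivalence classes of) nonnegative real-valued random variables, equipped with the topology of convergence in probability. A closed and convex subset C of L0+ is convexly compact if and only if C is bounded in probability. -/

import Mathlib

open MeasureTheory Filter Set Topology
open scoped ENNReal NNReal

open MeasureTheory Filter

/-- The set `L0+`: (versions of) nonnegative real-valued random variables. -/
def L0plus {Ω : Type*} [MeasurableSpace Ω] (μ : Measure Ω) : Set (Ω → ℝ) :=
  {f | Measurable f ∧ ∀ᵐ ω ∂μ, 0 ≤ f ω}

/-- A set of random variables is *bounded in probability* if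
`sup_{f ∈ C} P[|f| ≥ M] → 0` as `M → ∞`. -/
def BoundedInProbability {Ω : Type*} [MeasurableSpace Ω] (μ : Measure Ω)
    (C : Set (Ω → ℝ)) : Prop :=
  Tendsto (fun M : ℝ => ⨆ f ∈ C, μ {ω | M ≤ |f ω|}) atTop (nhds 0)

/-- A set of random variables is *closed in probability* (closed for the metrizable
topology of convergence in measure) if it contains every limit in measure of a
sequence of its elements. -/
def ClosedInMeasure {Ω : Type*} [MeasurableSpace Ω] (μ : Measure Ω)
    (C : Set (Ω → ℝ)) : Prop :=
  ∀ (f : ℕ → Ω → ℝ) (g : Ω → ℝ), (∀ n, f n ∈ C) →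
    TendstoInMeasure μ f atTop g → g ∈ C

/-- A convex set `C` of random variables is *convexly compact* (for the topology of
convergence in probability) if every family of closed (in probability) and convex
subsets of `C`, indexed by a nonempty set, with the finite-intersection property has
nonempty total intersection. -/
def ConvexlyCompactInMeasure {Ω : Type*} [MeasurableSpace Ω] (μ : Measure Ω)
    (C : Set (Ω → ℝ)) : Prop :=
  Convex ℝ C ∧
    ∀ (A : Type) (_ : Nonempty A) (F : A → Set (Ω → ℝ)),
      (∀ α, ClosedInMeasure μ (F α)) → (∀ α, Convex ℝ (F α)) → (∀ α, F α ⊆ C) →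
      (∀ D : Finset A, D.Nonempty → (⋂ α ∈ D, F α).Nonempty) →
      (⋂ α, F α).Nonempty



namespace CCAux
variable {Ω : Type*} [MeasurableSpace Ω] {μ : Measure Ω} [IsProbabilityMeasure μ]

lemma integrable_of_bound {f : Ω → ℝ} (hm : Measurable f) (B : ℝ) (hB : ∀ ω, |f ω| ≤ B) :
    Integrable f μ := by
  refine ⟨hm.aestronglyMeasurable, ?_⟩
  exact HasFiniteIntegral.of_bounded (C := B) (ae_of_all _ (fun ω => by
    simpa [Real.norm_eq_abs] using hB ω))

lemma ae_summable_of_summable_integral {Z : ℕ → Ω → ℝ} (hm : ∀ n, Measurable (Z n))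
    (hint : ∀ n, Integrable (Z n) μ) (hnn : ∀ n ω, 0 ≤ Z n ω)
    {B : ℕ → ℝ} (hB : ∀ n, ∫ ω, Z n ω ∂μ ≤ B n) (hBs : Summable B) :
    ∀ᵐ ω ∂μ, Summable (fun n => Z n ω) := by
  have hBnn : ∀ n, 0 ≤ B n := fun n =>
    le_trans (integral_nonneg (hnn n)) (hB n)
  have h1 : ∫⁻ ω, ∑' n, ENNReal.ofReal (Z n ω) ∂μ < ⊤ := by
    rw [lintegral_tsum (fun n => ((hm n).ennreal_ofReal).aemeasurable)]
    calc ∑' n, ∫⁻ ω, ENNReal.ofReal (Z n ω) ∂μ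
        ≤ ∑' n, ENNReal.ofReal (B n) := by
          refine ENNReal.tsum_le_tsum (fun n => ?_)
          rw [← ofReal_integral_eq_lintegral_ofReal (hint n) (ae_of_all _ (hnn n))]
          exact ENNReal.ofReal_le_ofReal (hB n)
      _ = ENNReal.ofReal (∑' n, B n) := (ENNReal.ofReal_tsum_of_nonneg hBnn hBs).symm
      _ < ⊤ := ENNReal.ofReal_lt_top
  have h2 : ∀ᵐ ω ∂μ, ∑' n, ENNReal.ofReal (Z n ω) < ⊤ := by
    refine ae_lt_top (Measurable.ennreal_tsum (fun n => (hm n).ennreal_ofReal)) h1.ne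
  filter_upwards [h2] with ω hω
  have := ENNReal.summable_toReal hω.ne
  refine this.congr (fun n => ?_)
  rw [ENNReal.toReal_ofReal (hnn n ω)]

/-- the strictly concave utility integrand -/
noncomputable def uI (x : ℝ) : ℝ := 1 - Real.exp (-(max x 0))

lemma uI_nonneg (x : ℝ) : 0 ≤ uI x := by
  have : Real.exp (-(max x 0)) ≤ 1 := by
    rw [Real.exp_le_one_iff]; simp [le_max_iff]
  simp only [uI]; linarith

lemma uI_le_one (x : ℝ) : uI x ≤ 1 := by
  have := Real.exp_pos (-(max x 0)); simp [uI]; linarith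

lemma uI_abs_le_one (x : ℝ) : |uI x| ≤ 1 :=
  abs_le.2 ⟨by linarith [uI_nonneg x], uI_le_one x⟩

lemma continuous_uI : Continuous uI := by
  unfold uI; fun_prop

noncomputable def uFn (μ : Measure Ω) (f : Ω → ℝ) : ℝ := ∫ ω, uI (f ω) ∂μ

lemma uFn_integrable {f : Ω → ℝ} (hm : Measurable f) :
    Integrable (fun ω => uI (f ω)) μ :=
  integrable_of_bound (continuous_uI.measurable.comp hm) 1 (fun ω => uI_abs_le_one _)

lemma uFn_nonneg (f : Ω → ℝ) : 0 ≤ uFn μ f :=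
  integral_nonneg (fun ω => uI_nonneg _)

lemma uFn_le_one {f : Ω → ℝ} (hm : Measurable f) : uFn μ f ≤ 1 := by
  have : uFn μ f ≤ ∫ _ω, (1:ℝ) ∂μ :=
    integral_mono (uFn_integrable hm) (integrable_const 1) (fun ω => uI_le_one _)
  simpa using this

/-- square-root-exponential function of a random variable -/
noncomputable def eE (f : Ω → ℝ) (ω : Ω) : ℝ := Real.exp (-(max (f ω) 0 / 2))

lemma eE_pos (f : Ω → ℝ) (ω : Ω) : 0 < eE f ω := Real.exp_pos _

lemma eE_le_one (f : Ω → ℝ) (ω : Ω) : eE f ω ≤ 1 := by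
  rw [eE, Real.exp_le_one_iff]
  have : (0:ℝ) ≤ max (f ω) 0 := le_max_right _ _
  linarith

lemma eE_measurable {f : Ω → ℝ} (hm : Measurable f) : Measurable (eE f) := by
  unfold eE; fun_prop

lemma exp_sq_identity (a b : ℝ) :
    (Real.exp (-(a/2)) - Real.exp (-(b/2)))^2
      = 2*(1 - Real.exp (-((a+b)/2))) - (1 - Real.exp (-a)) - (1 - Real.exp (-b)) := by
  have h1 : Real.exp (-(a/2)) ^ 2 = Real.exp (-a) := by
    rw [sq, ← Real.exp_add]; ring_nf
  have h2 : Real.exp (-(b/2)) ^ 2 = Real.exp (-b) := by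
    rw [sq, ← Real.exp_add]; ring_nf
  have h3 : Real.exp (-(a/2)) * Real.exp (-(b/2)) = Real.exp (-((a+b)/2)) := by
    rw [← Real.exp_add]; ring_nf
  nlinarith [h1, h2, h3]

/-- The key quadratic identity for the midpoint. -/
lemma quad_identity {f h : Ω → ℝ} (hfm : Measurable f) (hhm : Measurable h)
    (hf0 : ∀ᵐ ω ∂μ, 0 ≤ f ω) (hh0 : ∀ᵐ ω ∂μ, 0 ≤ h ω) :
    ∫ ω, (eE f ω - eE h ω)^2 ∂μ
      = 2 * uFn μ ((1/2 : ℝ) • f + (1/2 : ℝ) • h) - uFn μ f - uFn μ h := by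
  have hmid : Measurable ((1/2 : ℝ) • f + (1/2 : ℝ) • h) := by fun_prop
  have key : ∀ᵐ ω ∂μ, (eE f ω - eE h ω)^2
      = 2 * uI (((1/2 : ℝ) • f + (1/2 : ℝ) • h) ω) - uI (f ω) - uI (h ω) := by
    filter_upwards [hf0, hh0] with ω h1 h2
    have e1 : max (f ω) 0 = f ω := max_eq_left h1
    have e2 : max (h ω) 0 = h ω := max_eq_left h2
    have e3 : max (((1/2 : ℝ) • f + (1/2 : ℝ) • h) ω) 0 = (f ω + h ω)/2 := by
      simp only [Pi.add_apply, Pi.smul_apply, smul_eq_mul]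
      rw [max_eq_left (by linarith)]; ring
    have := exp_sq_identity (f ω) (h ω)
    simp only [eE, uI, e1, e2, e3]
    convert this using 3 <;> ring
  rw [integral_congr_ae key]
  have i1 := uFn_integrable (μ := μ) hfm
  have i2 := uFn_integrable (μ := μ) hhm
  have i3 := uFn_integrable (μ := μ) hmid
  have i4 : Integrable (fun ω => 2 * uI (((1/2 : ℝ) • f + (1/2 : ℝ) • h) ω) - uI (f ω)) μ :=
    (i3.const_mul 2).sub i1
  rw [integral_sub i4 i2, integral_sub (i3.const_mul 2) i1, integral_const_mul]
  rfl

/-- AM–GM bound: `∫|Y| ≤ (a/t + t)/2` when `∫ Y² ≤ a`. -/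
lemma integral_abs_le_of_sq {Y : Ω → ℝ} (hm : Measurable Y) (hb : ∀ ω, |Y ω| ≤ 1)
    {a t : ℝ} (ht : 0 < t) (hsq : ∫ ω, (Y ω)^2 ∂μ ≤ a) :
    ∫ ω, |Y ω| ∂μ ≤ (a / t + t) / 2 := by
  have hsqi : Integrable (fun ω => (Y ω)^2) μ := by
    refine integrable_of_bound (by fun_prop) 1 (fun ω => ?_)
    rw [abs_of_nonneg (sq_nonneg _), sq]
    calc Y ω * Y ω ≤ |Y ω| * |Y ω| := le_abs_self _ |>.trans (by rw [abs_mul])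
      _ ≤ 1 * 1 := mul_le_mul (hb ω) (hb ω) (abs_nonneg _) zero_le_one
      _ = 1 := by ring
  have h1 : ∫ ω, |Y ω| ∂μ ≤ ∫ ω, ((Y ω)^2 / t + t) / 2 ∂μ := by
    refine integral_mono (integrable_of_bound hm.abs 1 (fun ω => by
      rw [abs_abs]; exact hb ω)) ?_ (fun ω => ?_)
    · exact ((hsqi.div_const t).add (integrable_const t)).div_const 2
    · have h := sq_nonneg (|Y ω| - t)
      have h2 : (Y ω)^2 = |Y ω|^2 := (sq_abs _).symm
      rw [div_add' _ _ _ ht.ne', div_div, le_div_iff₀ (by positivity)]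
      nlinarith [abs_nonneg (Y ω)]
  refine h1.trans ?_
  have : ∫ ω, ((Y ω)^2 / t + t) / 2 ∂μ = ((∫ ω, (Y ω)^2 ∂μ) / t + t) / 2 := by
    rw [integral_div, integral_add (hsqi.div_const t) (integrable_const t),
      integral_div, integral_const]
    simp
  rw [this]
  have h3 : (∫ ω, (Y ω)^2 ∂μ) / t ≤ a / t := by gcongr
  linarith



/-- A sequence in `[0,1]` with summable `L¹` increments converges a.e. to a measurable limit. -/
lemma exists_ae_limit {X : ℕ → Ω → ℝ} (hm : ∀ n, Measurable (X n))
    (hpos : ∀ n ω, 0 ≤ X n ω) (hle : ∀ n ω, X n ω ≤ 1)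
    {B : ℕ → ℝ} (hB : ∀ n, ∫ ω, |X (n+1) ω - X n ω| ∂μ ≤ B n) (hBs : Summable B) :
    ∃ φ : Ω → ℝ, Measurable φ ∧ (∀ ω, 0 ≤ φ ω) ∧
      ∀ᵐ ω ∂μ, φ ω ≤ 1 ∧ Tendsto (fun n => X n ω) atTop (𝓝 (φ ω)) := by
  have hsum : ∀ᵐ ω ∂μ, Summable (fun n => |X (n+1) ω - X n ω|) := by
    refine ae_summable_of_summable_integral
      (fun n => ((hm (n+1)).sub (hm n)).abs)
      (fun n => integrable_of_bound (((hm (n+1)).sub (hm n)).abs) 2 (fun ω => ?_))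
      (fun n ω => abs_nonneg _) hB hBs
    have h1 := hpos (n+1) ω; have h2 := hle (n+1) ω
    have h3 := hpos n ω; have h4 := hle n ω
    rw [abs_abs, abs_le]; constructor <;> [linarith; linarith]
  refine ⟨fun ω => (limsup (fun n => ENNReal.ofReal (X n ω)) atTop).toReal,
    (Measurable.limsup (fun n => (hm n).ennreal_ofReal)).ennreal_toReal,
    fun ω => ENNReal.toReal_nonneg, ?_⟩
  filter_upwards [hsum] with ω hω
  have hc : CauchySeq (fun n => X n ω) :=
    cauchySeq_of_summable_dist (by simpa [Real.dist_eq, abs_sub_comm] using hω)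
  obtain ⟨l, hl⟩ := cauchySeq_tendsto_of_complete hc
  have hl1 : l ≤ 1 := le_of_tendsto' hl (fun n => hle n ω)
  have hofreal : Tendsto (fun n => ENNReal.ofReal (X n ω)) atTop (𝓝 (ENNReal.ofReal l)) :=
    (ENNReal.continuous_ofReal.tendsto l).comp hl
  have heq : (limsup (fun n => ENNReal.ofReal (X n ω)) atTop).toReal = l := by
    rw [hofreal.limsup_eq, ENNReal.toReal_ofReal (ge_of_tendsto' hl (fun n => hpos n ω))]
  rw [heq]
  exact ⟨hl1, hl⟩

/-- If `∑ ∫|Y n - T| < ∞` then `Y n → T` a.e. -/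
lemma ae_tendsto_of_summable_integral_dist {Y : ℕ → Ω → ℝ} {T : Ω → ℝ}
    (hm : ∀ n, Measurable (Y n)) (hTm : Measurable T)
    (hint : ∀ n, Integrable (fun ω => |Y n ω - T ω|) μ)
    {B : ℕ → ℝ} (hB : ∀ n, ∫ ω, |Y n ω - T ω| ∂μ ≤ B n) (hBs : Summable B) :
    ∀ᵐ ω ∂μ, Tendsto (fun n => Y n ω) atTop (𝓝 (T ω)) := by
  have hsum : ∀ᵐ ω ∂μ, Summable (fun n => |Y n ω - T ω|) :=
    ae_summable_of_summable_integral (fun n => ((hm n).sub hTm).abs) hint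
      (fun n ω => abs_nonneg _) hB hBs
  filter_upwards [hsum] with ω hω
  rw [tendsto_iff_dist_tendsto_zero]
  simpa [Real.dist_eq] using hω.tendsto_atTop_zero

/-- The truncation integrand. -/
noncomputable def vI (c x : ℝ) : ℝ := min (max x 0) c

lemma continuous_vI (c : ℝ) : Continuous (vI c) :=
  (continuous_id.max continuous_const).min continuous_const

lemma vI_nonneg {c : ℝ} (hc : 0 ≤ c) (x : ℝ) : 0 ≤ vI c x :=
  le_min (le_max_right _ _) hc

lemma vI_le {c : ℝ} (x : ℝ) : vI c x ≤ c := min_le_right _ _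

lemma vI_abs_le {c : ℝ} (hc : 0 ≤ c) (x : ℝ) : |vI c x| ≤ c :=
  abs_le.2 ⟨by linarith [vI_nonneg hc x], vI_le x⟩

noncomputable def vFn (μ : Measure Ω) (c : ℝ) (f : Ω → ℝ) : ℝ := ∫ ω, vI c (f ω) ∂μ

lemma vFn_integrable {c : ℝ} (hc : 0 ≤ c) {f : Ω → ℝ} (hm : Measurable f) :
    Integrable (fun ω => vI c (f ω)) μ :=
  integrable_of_bound ((continuous_vI c).measurable.comp hm) c (fun ω => vI_abs_le hc _)

/-- Concavity of `vFn` on a.e.-nonnegative functions. -/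
lemma vFn_concave {c : ℝ} (hc : 0 ≤ c) {f h : Ω → ℝ} (hfm : Measurable f) (hhm : Measurable h)
    (hf0 : ∀ᵐ ω ∂μ, 0 ≤ f ω) (hh0 : ∀ᵐ ω ∂μ, 0 ≤ h ω)
    {a b : ℝ} (ha : 0 ≤ a) (hb : 0 ≤ b) (hab : a + b = 1) :
    a * vFn μ c f + b * vFn μ c h ≤ vFn μ c (a • f + b • h) := by
  have key : ∀ᵐ ω ∂μ, a * vI c (f ω) + b * vI c (h ω) ≤ vI c ((a • f + b • h) ω) := by
    filter_upwards [hf0, hh0] with ω h1 h2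
    simp only [Pi.add_apply, Pi.smul_apply, smul_eq_mul]
    refine le_min (le_max_of_le_left ?_) ?_
    · have e1 : vI c (f ω) ≤ f ω := (min_le_left _ _).trans (by rw [max_eq_left h1])
      have e2 : vI c (h ω) ≤ h ω := (min_le_left _ _).trans (by rw [max_eq_left h2])
      nlinarith
    · have e1 : vI c (f ω) ≤ c := vI_le _
      have e2 : vI c (h ω) ≤ c := vI_le _
      nlinarith
  have h1 : ∫ ω, (a * vI c (f ω) + b * vI c (h ω)) ∂μ
      ≤ ∫ ω, vI c ((a • f + b • h) ω) ∂μ := by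
    refine integral_mono_ae (((vFn_integrable hc hfm).const_mul a).add
      ((vFn_integrable hc hhm).const_mul b)) (vFn_integrable hc (by fun_prop)) key
  calc a * vFn μ c f + b * vFn μ c h
      = ∫ ω, (a * vI c (f ω) + b * vI c (h ω)) ∂μ := by
        rw [integral_add ((vFn_integrable hc hfm).const_mul a)
          ((vFn_integrable hc hhm).const_mul b), integral_const_mul, integral_const_mul]
        rfl
    _ ≤ _ := h1

lemma vFn_ge {c : ℝ} (hc : 0 ≤ c) {f : Ω → ℝ} (hm : Measurable f) :
    c * (μ {ω | c ≤ max (f ω) 0}).toReal ≤ vFn μ c f := by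
  have hS : MeasurableSet {ω | c ≤ max (f ω) 0} :=
    measurableSet_le measurable_const (by fun_prop)
  have h1 : ∫ ω, Set.indicator {ω | c ≤ max (f ω) 0} (fun _ => c) ω ∂μ ≤ vFn μ c f := by
    refine integral_mono ((integrable_const c).indicator hS) (vFn_integrable hc hm)
      (fun ω => ?_)
    by_cases hmem : ω ∈ {ω | c ≤ max (f ω) 0}
    · rw [Set.indicator_of_mem hmem]
      exact le_min hmem le_rfl
    · rw [Set.indicator_of_notMem hmem]
      exact vI_nonneg hc _
  rw [integral_indicator_const _ hS] at h1
  simpa [mul_comm, Measure.real] using h1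

lemma vFn_le {c K : ℝ} (hc : 0 ≤ c) (hK : 0 ≤ K) {f : Ω → ℝ} (hm : Measurable f) :
    vFn μ c f ≤ K + c * (μ {ω | K ≤ max (f ω) 0}).toReal := by
  have hS : MeasurableSet {ω | K ≤ max (f ω) 0} :=
    measurableSet_le measurable_const (by fun_prop)
  have h1 : vFn μ c f ≤ ∫ ω, (K + Set.indicator {ω | K ≤ max (f ω) 0} (fun _ => c) ω) ∂μ := by
    refine integral_mono (vFn_integrable hc hm)
      ((integrable_const K).add ((integrable_const c).indicator hS)) (fun ω => ?_)
    by_cases hmem : ω ∈ {ω | K ≤ max (f ω) 0}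
    · rw [Set.indicator_of_mem hmem]
      exact (vI_le _).trans (le_add_of_nonneg_left hK)
    · rw [Set.indicator_of_notMem hmem, add_zero]
      have : max (f ω) 0 < K := not_le.1 hmem
      exact ((min_le_left _ _).trans this.le)
  rw [integral_add (integrable_const K) ((integrable_const c).indicator hS),
    integral_const, integral_indicator_const _ hS] at h1
  simpa [mul_comm, Measure.real] using h1

/-- Limits in measure preserve lower bounds on `vFn`. -/
lemma vFn_ge_of_tendstoInMeasure {c t : ℝ} (hc : 0 ≤ c) {s : ℕ → Ω → ℝ} {g : Ω → ℝ}
    (hsm : ∀ j, Measurable (s j)) (hgm : Measurable g)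
    (htm : TendstoInMeasure μ s atTop g) (hts : ∀ j, t ≤ vFn μ c (s j)) :
    t ≤ vFn μ c g := by
  obtain ⟨ns, _, hae⟩ := htm.exists_seq_tendsto_ae
  have hdom : Tendsto (fun k => vFn μ c (s (ns k))) atTop (𝓝 (vFn μ c g)) := by
    refine tendsto_integral_of_dominated_convergence (fun _ => c)
      (fun k => ((continuous_vI c).measurable.comp (hsm (ns k))).aestronglyMeasurable)
      (integrable_const c) (fun k => ae_of_all _ (fun ω => ?_)) ?_
    · simpa [Real.norm_eq_abs] using vI_abs_le hc (s (ns k) ω)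
    · filter_upwards [hae] with ω hω
      exact ((continuous_vI c).tendsto _).comp hω
  exact ge_of_tendsto' hdom (fun k => hts (ns k))

lemma forward {Ω : Type*} [MeasurableSpace Ω] (μ : Measure Ω) [IsProbabilityMeasure μ]
    {C : Set (Ω → ℝ)} (hsub : C ⊆ L0plus μ)
    (hclosed : ClosedInMeasure μ C) (hconv : Convex ℝ C)
    (hcc : ConvexlyCompactInMeasure μ C) : BoundedInProbability μ C := by
  by_contra hb
  unfold BoundedInProbability at hb
  set S : ℝ → ℝ≥0∞ := fun M => ⨆ f ∈ C, μ {ω | M ≤ |f ω|} with hSdef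
  have hanti : Antitone S := by
    intro M M' hMM'
    exact iSup₂_mono (fun f hf => measure_mono (fun ω hω => le_trans hMM' hω))
  rw [ENNReal.tendsto_nhds_zero] at hb
  push_neg at hb
  obtain ⟨ε, hε0, hfreq⟩ := hb
  have hε : ∀ M, ε ≤ S M := by
    intro M
    obtain ⟨M', hM', hMM'⟩ := (hfreq.and_eventually (eventually_ge_atTop M)).exists
    exact le_trans hM'.le (hanti hMM')
  set ε' := min ε 1 with hε'def
  have hε'0 : 0 < ε' := lt_min hε0 one_pos
  have hε'S : ∀ M, ε' ≤ S M := fun M => le_trans (min_le_left _ _) (hε M)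
  have hε'top : ε' ≠ ⊤ := ne_top_of_le_ne_top ENNReal.one_ne_top (min_le_right _ _)
  set δ := ε' / 2 with hδdef
  have hδ0 : 0 < δ := ENNReal.half_pos hε'0.ne'
  have hδtop : δ ≠ ⊤ := by
    rw [hδdef]
    exact ne_top_of_le_ne_top hε'top ENNReal.half_le_self
  have hδlt : δ < ε' := ENNReal.half_lt_self hε'0.ne' hε'top
  have hpick : ∀ n : ℕ, ∃ f, f ∈ C ∧ δ < μ {ω | ((n:ℝ)+1) ≤ |f ω|} := by
    intro n
    have h1 : δ < S ((n:ℝ)+1) := lt_of_lt_of_le hδlt (hε'S _)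
    rw [hSdef, lt_iSup_iff] at h1
    obtain ⟨f, hf⟩ := h1
    rw [lt_iSup_iff] at hf
    obtain ⟨hfC, hf2⟩ := hf
    exact ⟨f, hfC, hf2⟩
  choose fs hfsC hfsδ using hpick
  set δr := δ.toReal with hδrdef
  have hδr : 0 < δr := ENNReal.toReal_pos hδ0.ne' hδtop
  set G : ℕ → Set (Ω → ℝ) := fun n => {g | g ∈ C ∧ ((n:ℝ)+1) * δr ≤ vFn μ ((n:ℝ)+1) g}
    with hGdef
  have hGsub : ∀ n, G n ⊆ C := fun n g hg => hg.1
  have hGconv : ∀ n, Convex ℝ (G n) := by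
    intro n x hx y hy a b ha hb hab
    refine ⟨hconv hx.1 hy.1 ha hb hab, ?_⟩
    have hcv := vFn_concave (μ := μ) (c := (n:ℝ)+1) (by positivity)
      (hsub hx.1).1 (hsub hy.1).1 (hsub hx.1).2 (hsub hy.1).2 ha hb hab
    calc ((n:ℝ)+1)*δr = a * (((n:ℝ)+1)*δr) + b * (((n:ℝ)+1)*δr) := by
          rw [← add_mul, hab, one_mul]
      _ ≤ a * vFn μ ((n:ℝ)+1) x + b * vFn μ ((n:ℝ)+1) y :=
          add_le_add (mul_le_mul_of_nonneg_left hx.2 ha) (mul_le_mul_of_nonneg_left hy.2 hb)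
      _ ≤ _ := hcv
  have hGclosed : ∀ n, ClosedInMeasure μ (G n) := by
    intro n s g hmem htend
    have hgC : g ∈ C := hclosed s g (fun j => (hmem j).1) htend
    exact ⟨hgC, vFn_ge_of_tendstoInMeasure (by positivity)
      (fun j => (hsub (hmem j).1).1) (hsub hgC).1 htend (fun j => (hmem j).2)⟩
  have hGfip : ∀ D : Finset ℕ, D.Nonempty → (⋂ n ∈ D, G n).Nonempty := by
    intro D hD
    set N := D.max' hD with hNdef
    refine ⟨fs N, Set.mem_iInter₂.2 (fun n hn => ?_)⟩
    refine ⟨hfsC N, ?_⟩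
    have hcn : ((n:ℝ)+1) ≤ ((N:ℝ)+1) := by
      have := D.le_max' n hn
      have : (n:ℝ) ≤ (N:ℝ) := by exact_mod_cast this
      linarith
    have hsubset : ∀ᵐ ω ∂μ, ω ∈ {ω | ((N:ℝ)+1) ≤ |fs N ω|}
        → ω ∈ {ω | ((n:ℝ)+1) ≤ max (fs N ω) 0} := by
      filter_upwards [(hsub (hfsC N)).2] with ω h0 hω
      have hω' : ((N:ℝ)+1) ≤ |fs N ω| := hω
      rw [abs_of_nonneg h0] at hω'
      exact le_trans hcn (hω'.trans (le_max_left _ _))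
    have h2 : δ ≤ μ {ω | ((n:ℝ)+1) ≤ max (fs N ω) 0} :=
      le_trans (hfsδ N).le (measure_mono_ae (hsubset.mono (fun ω h => h)))
    have h3 : δr ≤ (μ {ω | ((n:ℝ)+1) ≤ max (fs N ω) 0}).toReal :=
      ENNReal.toReal_mono (measure_ne_top μ _) h2
    calc ((n:ℝ)+1) * δr ≤ ((n:ℝ)+1) * (μ {ω | ((n:ℝ)+1) ≤ max (fs N ω) 0}).toReal :=
          mul_le_mul_of_nonneg_left h3 (by positivity)
      _ ≤ vFn μ ((n:ℝ)+1) (fs N) := vFn_ge (by positivity) (hsub (hfsC N)).1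
  obtain ⟨g, hg⟩ := hcc.2 ℕ ⟨0⟩ G hGclosed hGconv hGsub hGfip
  have hgmem : ∀ n, g ∈ G n := fun n => Set.mem_iInter.1 hg n
  have hgC : g ∈ C := (hgmem 0).1
  have hgm : Measurable g := (hsub hgC).1
  -- choose truncation level K
  have hmeasset : ∀ k : ℕ, MeasurableSet {ω | (k:ℝ) ≤ max (g ω) 0} :=
    fun k => measurableSet_le measurable_const (by fun_prop)
  have hempty : (⋂ k : ℕ, {ω | (k:ℝ) ≤ max (g ω) 0}) = ∅ := by
    ext ω
    simp only [Set.mem_iInter, Set.mem_setOf_eq, Set.mem_empty_iff_false, iff_false, not_forall]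
    obtain ⟨k, hk⟩ := exists_nat_gt (max (g ω) 0)
    exact ⟨k, not_le.2 hk⟩
  have htend0 : Tendsto (fun k : ℕ => μ {ω | (k:ℝ) ≤ max (g ω) 0}) atTop (𝓝 0) := by
    have h := tendsto_measure_iInter_atTop (μ := μ)
      (fun k => (hmeasset k).nullMeasurableSet)
      (fun k k' hkk' => Set.setOf_subset_setOf.2 (fun ω hω => le_trans (by exact_mod_cast hkk') hω))
      ⟨0, measure_ne_top μ _⟩
    rwa [hempty, measure_empty] at h
  have hK : ∃ K : ℕ, μ {ω | (K:ℝ) ≤ max (g ω) 0} < ENNReal.ofReal (δr/2) := by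
    have := (htend0.eventually_lt_const (by
      simp only [ENNReal.ofReal_pos]; positivity : (0:ℝ≥0∞) < ENNReal.ofReal (δr/2))).exists
    exact this
  obtain ⟨K, hK⟩ := hK
  have hKr : (μ {ω | (K:ℝ) ≤ max (g ω) 0}).toReal ≤ δr/2 :=
    ENNReal.toReal_le_of_le_ofReal (by positivity) hK.le
  obtain ⟨n, hn⟩ := exists_nat_gt ((K:ℝ) / (δr/2))
  have hvle := vFn_le (μ := μ) (c := (n:ℝ)+1) (K := (K:ℝ)) (by positivity) (by positivity) hgm
  have hvge : ((n:ℝ)+1) * δr ≤ vFn μ ((n:ℝ)+1) g := (hgmem n).2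
  have hfinal : ((n:ℝ)+1) * δr ≤ (K:ℝ) + ((n:ℝ)+1) * (δr/2) := by
    refine hvge.trans (hvle.trans ?_)
    have : ((n:ℝ)+1) * (μ {ω | (K:ℝ) ≤ max (g ω) 0}).toReal ≤ ((n:ℝ)+1) * (δr/2) :=
      mul_le_mul_of_nonneg_left hKr (by positivity)
    linarith
  rw [div_lt_iff₀ (by positivity)] at hn
  nlinarith

lemma backward {Ω : Type*} [MeasurableSpace Ω] (μ : Measure Ω) [IsProbabilityMeasure μ]
    {C : Set (Ω → ℝ)} (hsub : C ⊆ L0plus μ)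
    (hclosed : ClosedInMeasure μ C) (hconv : Convex ℝ C)
    (hbdd : BoundedInProbability μ C) : ConvexlyCompactInMeasure μ C := by
  refine ⟨hconv, ?_⟩
  intro A hA F hFclosed hFconv hFsub hFfip
  classical
  obtain ⟨α₀⟩ := hA
  set CD : Finset A → Set (Ω → ℝ) := fun D => C ∩ ⋂ α ∈ D, F α with hCDdef
  have hCD_sub : ∀ D, CD D ⊆ C := fun D => Set.inter_subset_left
  have hCD_mono : ∀ {D D' : Finset A}, D ⊆ D' → CD D' ⊆ CD D := by
    intro D D' hDD'
    refine Set.inter_subset_inter le_rfl ?_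
    intro x hx
    exact Set.mem_iInter₂.2 (fun α hα => Set.mem_iInter₂.1 hx α (hDD' hα))
  have hCD_ne : ∀ D, (CD D).Nonempty := by
    intro D
    rcases D.eq_empty_or_nonempty with rfl | hD
    · obtain ⟨x, hx⟩ := hFfip {α₀} (Finset.singleton_nonempty _)
      have hxF : x ∈ F α₀ := Set.mem_iInter₂.1 hx α₀ (Finset.mem_singleton_self _)
      exact ⟨x, hFsub α₀ hxF, by simp⟩
    · obtain ⟨x, hx⟩ := hFfip D hD
      obtain ⟨β, hβ⟩ := hD
      exact ⟨x, hFsub β (Set.mem_iInter₂.1 hx β hβ), hx⟩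
  have hCD_closed : ∀ D, ClosedInMeasure μ (CD D) := by
    intro D s g hmem htend
    refine ⟨hclosed s g (fun n => (hmem n).1) htend, ?_⟩
    refine Set.mem_iInter₂.2 (fun α hα => ?_)
    exact hFclosed α s g (fun n => Set.mem_iInter₂.1 (hmem n).2 α hα) htend
  have hCD_conv : ∀ D, Convex ℝ (CD D) :=
    fun D => hconv.inter (convex_iInter (fun α => convex_iInter (fun _ => hFconv α)))
  set cD : Finset A → ℝ := fun D => sSup (uFn μ '' CD D) with hcDdef
  have himg_ne : ∀ D, (uFn μ '' CD D).Nonempty := fun D => (hCD_ne D).image _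
  have himg_bdd : ∀ D, BddAbove (uFn μ '' CD D) := by
    intro D
    refine ⟨1, ?_⟩
    rintro x ⟨f, hf, rfl⟩
    exact uFn_le_one (hsub (hCD_sub D hf)).1
  have h_le_cD : ∀ D f, f ∈ CD D → uFn μ f ≤ cD D :=
    fun D f hf => le_csSup (himg_bdd D) ⟨f, hf, rfl⟩
  have h_exists : ∀ (D : Finset A) (t : ℝ), t < cD D → ∃ f ∈ CD D, t < uFn μ f := by
    intro D t ht
    obtain ⟨x, ⟨f, hf, rfl⟩, hx⟩ := exists_lt_of_lt_csSup (himg_ne D) ht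
    exact ⟨f, hf, hx⟩
  have hcD_anti : ∀ {D D' : Finset A}, D ⊆ D' → cD D' ≤ cD D := fun {D D'} h =>
    csSup_le_csSup (himg_bdd D) (himg_ne D') (Set.image_mono (hCD_mono h))
  have hcD_nonneg : ∀ D, 0 ≤ cD D := by
    intro D
    obtain ⟨f, hf⟩ := hCD_ne D
    exact le_trans (uFn_nonneg f) (h_le_cD D f hf)
  set cbar : ℝ := ⨅ D, cD D with hcbar
  have hbdd_below : BddBelow (Set.range cD) := ⟨0, by rintro x ⟨D, rfl⟩; exact hcD_nonneg D⟩
  have hcbar_le : ∀ D, cbar ≤ cD D := fun D => ciInf_le hbdd_below D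
  set q : ℕ → ℝ := fun n => (1/4 : ℝ)^n with hq
  have hq_pos : ∀ n, 0 < q n := fun n => by positivity
  have hq4 : ∀ n, q n = (1/2:ℝ)^n * (1/2:ℝ)^n := by
    intro n; simp only [hq]; rw [← mul_pow]; norm_num
  have hDn : ∀ n : ℕ, ∃ D, cD D < cbar + q n := by
    intro n
    refine exists_lt_of_ciInf_lt ?_
    rw [← hcbar]
    linarith [hq_pos n]
  choose Dn hDn using hDn
  set E : ℕ → Finset A := fun n => (Finset.range (n+1)).biUnion Dn with hE
  have hE_mono : ∀ {m n : ℕ}, m ≤ n → E m ⊆ E n := by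
    intro m n h
    exact Finset.biUnion_subset_biUnion_of_subset_left _ (Finset.range_subset_range.2 (by omega))
  have hDnE : ∀ n, Dn n ⊆ E n := fun n =>
    Finset.subset_biUnion_of_mem _ (Finset.self_mem_range_succ n)
  have hcE : ∀ n, cD (E n) < cbar + q n := fun n =>
    lt_of_le_of_lt (hcD_anti (hDnE n)) (hDn n)
  have hfn : ∀ n, ∃ f ∈ CD (E n), cD (E n) - q n < uFn μ f := by
    intro n
    exact h_exists _ _ (by linarith [hq_pos n])
  choose f hfmem hfu using hfn
  have hfC : ∀ n, f n ∈ C := fun n => hCD_sub _ (hfmem n)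
  have hfmsr : ∀ n, Measurable (f n) := fun n => (hsub (hfC n)).1
  have hfnn : ∀ n, ∀ᵐ ω ∂μ, 0 ≤ f n ω := fun n => (hsub (hfC n)).2
  have hfu_lb : ∀ n, cbar - q n < uFn μ (f n) := by
    intro n
    have := hcbar_le (E n)
    linarith [hfu n]
  have hfu_ub : ∀ n, uFn μ (f n) < cbar + q n := fun n =>
    lt_of_le_of_lt (h_le_cD _ _ (hfmem n)) (hcE n)
  set X : ℕ → Ω → ℝ := fun n => eE (f n) with hX
  have hmid_mem : ∀ {g h : Ω → ℝ} {D : Finset A}, g ∈ CD D → h ∈ CD D →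
      (1/2:ℝ) • g + (1/2:ℝ) • h ∈ CD D := fun {g h D} hg hh =>
    hCD_conv D hg hh (by norm_num) (by norm_num) (by norm_num)
  have hquad : ∀ {g h : Ω → ℝ}, g ∈ C → h ∈ C →
      ∫ ω, (eE g ω - eE h ω)^2 ∂μ
        = 2 * uFn μ ((1/2:ℝ) • g + (1/2:ℝ) • h) - uFn μ g - uFn μ h :=
    fun {g h} hg hh => quad_identity (hsub hg).1 (hsub hh).1 (hsub hg).2 (hsub hh).2
  have hXsq : ∀ m n, m ≤ n → ∫ ω, (X n ω - X m ω)^2 ∂μ ≤ 4 * q m := by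
    intro m n hmn
    have hmem_n : f n ∈ CD (E m) := hCD_mono (hE_mono hmn) (hfmem n)
    have hmidm : (1/2:ℝ) • f n + (1/2:ℝ) • f m ∈ CD (E m) := hmid_mem hmem_n (hfmem m)
    have h1 : uFn μ ((1/2:ℝ) • f n + (1/2:ℝ) • f m) ≤ cD (E m) := h_le_cD _ _ hmidm
    have h2 := hquad (hfC n) (hfC m)
    have hqnm : q n ≤ q m := by
      simp only [hq]
      exact pow_le_pow_of_le_one (by norm_num) (by norm_num) hmn
    rw [hX]
    rw [h2]
    have h3 := hfu_lb n
    have h4 := hfu_lb m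
    have h5 := hcE m
    linarith
  have hXm : ∀ n, Measurable (X n) := fun n => eE_measurable (hfmsr n)
  have hXpos : ∀ n ω, 0 ≤ X n ω := fun n ω => (eE_pos _ _).le
  have hXle : ∀ n ω, X n ω ≤ 1 := fun n ω => eE_le_one _ _
  have habs1 : ∀ (Y Z : Ω → ℝ), (∀ ω, 0 ≤ Y ω) → (∀ ω, Y ω ≤ 1) → (∀ ω, 0 ≤ Z ω) →
      (∀ ω, Z ω ≤ 1) → ∀ ω, |Y ω - Z ω| ≤ 1 := by
    intro Y Z h1 h2 h3 h4 ω
    rw [abs_le]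
    constructor <;> [linarith [h2 ω, h1 ω, h3 ω, h4 ω]; linarith [h2 ω, h1 ω, h3 ω, h4 ω]]
  have hhalfpos : ∀ n : ℕ, (0:ℝ) < (1/2:ℝ)^n := fun n => by positivity
  have hXinc : ∀ n, ∫ ω, |X (n+1) ω - X n ω| ∂μ ≤ 3 * (1/2:ℝ)^n := by
    intro n
    have h0 := integral_abs_le_of_sq (μ := μ) (Y := fun ω => X (n+1) ω - X n ω)
      ((hXm (n+1)).sub (hXm n))
      (habs1 _ _ (hXpos (n+1)) (hXle (n+1)) (hXpos n) (hXle n))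
      (t := (1/2:ℝ)^n) (hhalfpos n) (hXsq n (n+1) (by omega))
    have e1 : 4 * q n / (1/2:ℝ)^n = 4 * (1/2:ℝ)^n := by
      rw [hq4 n]
      field_simp
    refine h0.trans ?_
    rw [e1]
    linarith [hhalfpos n]
  obtain ⟨φ, hφm, hφ0, hφae⟩ := exists_ae_limit hXm hXpos hXle hXinc
    ((summable_geometric_of_lt_one (by norm_num) (by norm_num)).mul_left 3)
  -- φ is a.e. strictly positive, by boundedness in probability
  have hφpos : ∀ᵐ ω ∂μ, 0 < φ ω := by
    have key : ∀ M : ℝ, μ {ω | φ ω ≤ 0} ≤ ⨆ f ∈ C, μ {ω | M ≤ |f ω|} := by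
      intro M
      set T : ℕ → Set Ω := fun N => {ω | ∀ n, N ≤ n → M < max (f n ω) 0} with hT
      have hTmono : Monotone T := fun N N' h ω hω n hn => hω n (le_trans h hn)
      have hsubT : ∀ᵐ ω ∂μ, ω ∈ {ω | φ ω ≤ 0} → ω ∈ ⋃ N, T N := by
        filter_upwards [hφae] with ω hω hφ0'
        obtain ⟨hφ1, hφt⟩ := hω
        have hlt : φ ω < Real.exp (-(M/2)) := lt_of_le_of_lt hφ0' (Real.exp_pos _)
        have hev : ∀ᶠ n in atTop, X n ω < Real.exp (-(M/2)) :=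
          hφt.eventually_lt_const hlt
        obtain ⟨N, hN⟩ := eventually_atTop.1 hev
        refine Set.mem_iUnion.2 ⟨N, fun n hn => ?_⟩
        have := hN n hn
        have h2 : -(max (f n ω) 0 / 2) < -(M/2) := Real.exp_lt_exp.1 this
        linarith
      have h1 : μ {ω | φ ω ≤ 0} ≤ μ (⋃ N, T N) :=
        measure_mono_ae (hsubT.mono fun ω h => h)
      have h2 : μ (⋃ N, T N) = ⨆ N, μ (T N) := hTmono.measure_iUnion
      refine h1.trans (h2 ▸ iSup_le (fun N => ?_))
      have h3 : T N ⊆ {ω | M ≤ |f N ω|} := by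
        intro ω hω
        have := hω N le_rfl
        have h4 : max (f N ω) 0 ≤ |f N ω| := max_le (le_abs_self _) (abs_nonneg _)
        exact le_of_lt (lt_of_lt_of_le this h4)
      exact le_trans (measure_mono h3) (le_iSup₂ (f := fun g (_ : g ∈ C) =>
        μ {ω | M ≤ |g ω|}) (f N) (hfC N))
    have hzero : μ {ω | φ ω ≤ 0} ≤ 0 := ge_of_tendsto' hbdd key
    rw [ae_iff]
    refine le_antisymm (le_trans (measure_mono ?_) hzero) zero_le
    intro ω hω
    exact not_lt.1 hω
  set g : Ω → ℝ := fun ω => -2 * Real.log (φ ω) with hgdef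
  have hgm : Measurable g := (Real.measurable_log.comp hφm).const_mul (-2)
  have hfg : ∀ᵐ ω ∂μ, Tendsto (fun n => f n ω) atTop (𝓝 (g ω)) := by
    filter_upwards [hφae, hφpos, ae_all_iff.2 hfnn] with ω hω hpos hnn
    obtain ⟨hφ1, hφt⟩ := hω
    have hlog : Tendsto (fun n => Real.log (X n ω)) atTop (𝓝 (Real.log (φ ω))) :=
      (Real.continuousAt_log hpos.ne').tendsto.comp hφt
    have heq : ∀ n, f n ω = -2 * Real.log (X n ω) := by
      intro n
      simp only [hX, eE, Real.log_exp, max_eq_left (hnn n)]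
      ring
    rw [show (fun n => f n ω) = fun n => -2 * Real.log (X n ω) from funext heq]
    exact hlog.const_mul (-2)
  have hg_CD_E : ∀ n, g ∈ CD (E n) := by
    intro n
    refine hCD_closed (E n) (fun k => f (k + n)) g
      (fun k => hCD_mono (hE_mono (by omega : n ≤ k + n)) (hfmem (k+n))) ?_
    refine tendstoInMeasure_of_tendsto_ae (fun k => (hfmsr (k+n)).aestronglyMeasurable) ?_
    filter_upwards [hfg] with ω hω
    exact hω.comp (tendsto_add_atTop_nat n)
  have hgC : g ∈ C := hCD_sub _ (hg_CD_E 0)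
  have hq0 : Tendsto q atTop (𝓝 0) := by
    simp only [hq]
    exact tendsto_pow_atTop_nhds_zero_of_lt_one (by norm_num) (by norm_num)
  have hug : uFn μ g = cbar := by
    have ht1 : Tendsto (fun n => uFn μ (f n)) atTop (𝓝 (uFn μ g)) := by
      refine tendsto_integral_of_dominated_convergence (fun _ => 1)
        (fun n => (continuous_uI.measurable.comp (hfmsr n)).aestronglyMeasurable)
        (integrable_const 1) (fun n => ae_of_all _ (fun ω => by
          simpa [Real.norm_eq_abs] using uI_abs_le_one (f n ω))) ?_
      filter_upwards [hfg] with ω hω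
      exact (continuous_uI.tendsto _).comp hω
    have ht2 : Tendsto (fun n => uFn μ (f n)) atTop (𝓝 cbar) := by
      refine tendsto_of_tendsto_of_tendsto_of_le_of_le
        (g := fun n => cbar - q n) (h := fun n => cbar + q n) ?_ ?_
        (fun n => (hfu_lb n).le) (fun n => (hfu_ub n).le)
      · simpa using tendsto_const_nhds.sub hq0
      · simpa using tendsto_const_nhds.add hq0
    exact tendsto_nhds_unique ht1 ht2
  have hXgφ : ∀ᵐ ω ∂μ, eE g ω = φ ω := by
    filter_upwards [hφpos, hφae] with ω hpos hω
    obtain ⟨hφ1, _⟩ := hω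
    have hlog_np : Real.log (φ ω) ≤ 0 := Real.log_nonpos hpos.le hφ1
    have hgnn' : 0 ≤ g ω := by
      simp only [hgdef]
      linarith
    have e1 : max (g ω) 0 = g ω := max_eq_left hgnn'
    simp only [eE, e1, hgdef]
    rw [max_eq_left (show (0:ℝ) ≤ -2 * Real.log (φ ω) by linarith),
      show -(-2 * Real.log (φ ω) / 2) = Real.log (φ ω) by ring, Real.exp_log hpos]
  have hg_CD : ∀ D : Finset A, g ∈ CD D := by
    intro D
    have hhn : ∀ n, ∃ h ∈ CD (D ∪ E n), cD (D ∪ E n) - q n < uFn μ h :=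
      fun n => h_exists _ _ (by linarith [hq_pos n])
    choose h hhmem hhu using hhn
    have hhC : ∀ n, h n ∈ C := fun n => hCD_sub _ (hhmem n)
    have hhEn : ∀ n, h n ∈ CD (E n) := fun n => hCD_mono Finset.subset_union_right (hhmem n)
    have hhD : ∀ n, h n ∈ CD D := fun n => hCD_mono Finset.subset_union_left (hhmem n)
    have hhu_lb : ∀ n, cbar - q n < uFn μ (h n) := by
      intro n
      have := hcbar_le (D ∪ E n)
      linarith [hhu n]
    have hsq : ∀ n, ∫ ω, (eE g ω - eE (h n) ω)^2 ∂μ ≤ 3 * q n := by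
      intro n
      have hmid : (1/2:ℝ) • g + (1/2:ℝ) • h n ∈ CD (E n) := hmid_mem (hg_CD_E n) (hhEn n)
      have h1 : uFn μ ((1/2:ℝ) • g + (1/2:ℝ) • h n) ≤ cD (E n) := h_le_cD _ _ hmid
      rw [hquad hgC (hhC n)]
      have h3 := hhu_lb n
      have h5 := hcE n
      linarith [hug.ge, hug.le]
    have hYm : ∀ n, Measurable (eE (h n)) := fun n => eE_measurable (hsub (hhC n)).1
    have hinc : ∀ n, ∫ ω, |eE (h n) ω - eE g ω| ∂μ ≤ 2 * (1/2:ℝ)^n := by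
      intro n
      have h0 := integral_abs_le_of_sq (μ := μ) (Y := fun ω => eE (h n) ω - eE g ω)
        ((hYm n).sub (eE_measurable hgm))
        (habs1 _ _ (fun ω => (eE_pos _ _).le) (fun ω => eE_le_one _ _)
          (fun ω => (eE_pos _ _).le) (fun ω => eE_le_one _ _))
        (a := 3 * q n) (t := (1/2:ℝ)^n) (hhalfpos n) ?_
      · have e1 : 3 * q n / (1/2:ℝ)^n = 3 * (1/2:ℝ)^n := by
          rw [hq4 n]; field_simp
        refine h0.trans ?_
        rw [e1]
        linarith [hhalfpos n]
      · calc ∫ ω, (eE (h n) ω - eE g ω)^2 ∂μ = ∫ ω, (eE g ω - eE (h n) ω)^2 ∂μ := by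
              congr 1; funext ω; ring
          _ ≤ 3 * q n := hsq n
    have htendY : ∀ᵐ ω ∂μ, Tendsto (fun n => eE (h n) ω) atTop (𝓝 (eE g ω)) := by
      refine ae_tendsto_of_summable_integral_dist hYm (eE_measurable hgm)
        (fun n => integrable_of_bound (((hYm n).sub (eE_measurable hgm)).abs) 1
          (fun ω => by
            rw [abs_abs]
            exact habs1 _ _ (fun ω => (eE_pos _ _).le) (fun ω => eE_le_one _ _)
              (fun ω => (eE_pos _ _).le) (fun ω => eE_le_one _ _) ω)) hinc
        ((summable_geometric_of_lt_one (by norm_num) (by norm_num)).mul_left 2)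
    have hhg : ∀ᵐ ω ∂μ, Tendsto (fun n => h n ω) atTop (𝓝 (g ω)) := by
      filter_upwards [htendY, hXgφ, hφpos, ae_all_iff.2 (fun n => (hsub (hhC n)).2)]
        with ω h1 h2 h3 h4
      have h1' : Tendsto (fun n => eE (h n) ω) atTop (𝓝 (φ ω)) := h2 ▸ h1
      have hlog : Tendsto (fun n => Real.log (eE (h n) ω)) atTop (𝓝 (Real.log (φ ω))) :=
        (Real.continuousAt_log h3.ne').tendsto.comp h1'
      have heq : ∀ n, h n ω = -2 * Real.log (eE (h n) ω) := by
        intro n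
        simp only [eE, Real.log_exp, max_eq_left (h4 n)]
        ring
      rw [show (fun n => h n ω) = fun n => -2 * Real.log (eE (h n) ω) from funext heq,
        show g ω = -2 * Real.log (φ ω) from rfl]
      exact hlog.const_mul (-2)
    exact hCD_closed D h g hhD
      (tendstoInMeasure_of_tendsto_ae (fun n => (hsub (hhC n)).1.aestronglyMeasurable) hhg)
  refine ⟨g, Set.mem_iInter.2 (fun α => ?_)⟩
  have h1 := (hg_CD {α}).2
  exact Set.mem_iInter₂.1 h1 α (Finset.mem_singleton_self _)

end CCAux

/-- On a complete probability space, a closed and convex subset `C` of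
`L0+` is convexly compact if and only if it is bounded in probability. -/
theorem convexlyCompactInMeasure_iff_boundedInProbability
    {Ω : Type*} [MeasurableSpace Ω] (μ : Measure Ω) [IsProbabilityMeasure μ]
    [μ.IsComplete]
    (C : Set (Ω → ℝ)) (hsub : C ⊆ L0plus μ)
    (hclosed : ClosedInMeasure μ C) (hconv : Convex ℝ C) :
    ConvexlyCompactInMeasure μ C ↔ BoundedInProbability μ C :=
  ⟨CCAux.forward μ hsub hclosed hconv, CCAux.backward μ hsub hclosed hconv⟩
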